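/- Let p be a prime, k ≥ 1, u ≥ 1, and v a positive integer divisible by lcm(p^{k−1}, u, 2) (and additionally by 4 if p = 2 and k = 2). Define α(n) = (ℓ_{p,k}(n!), ν_p(n!) mod u, n mod v). Then α satisfies: α(0) = (1, 0, 0), and for all n ≥ 0 and 0 ≤ i ≤ p − 1, if α(n) = (x, y, z), then α(pn + i) = (x · (pz + i)_p! mod p^k, (y + z) mod u, (pz + i) mod v). Consequently the infinite word α(0)α(1)α(2)⋯ is a fixed point of the p-uniform morphism ψ sending (x,y,z) to the concatenation over i = 0,…,p−1 of these images. -/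

import Mathlib

def lastDigits (b k m : ℕ) : ℕ := (m / b ^ padicValNat b m) % b ^ k

def gaussFac (c n : ℕ) : ℕ := ∏ m ∈ (Finset.Icc 1 n).filter (fun m => Nat.Coprime c m), m

lemma prodIcc (n : ℕ) : ∏ x ∈ Finset.Icc 1 n, x = Nat.factorial n := by
  rw [← Finset.Ico_add_one_right_eq_Icc]; exact Finset.prod_Ico_id_eq_factorial n
lemma factA {p : ℕ} (hp : p.Prime) (n i : ℕ) (hi : i < p) :
    Nat.factorial (p * n + i) = p ^ n * Nat.factorial n * gaussFac p (p * n + i) := by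
  have hp0 : 0 < p := hp.pos
  have h1 : ((Finset.Icc 1 (p*n+i)).filter (fun m => p ∣ m))
      = (Finset.Icc 1 n).image (fun j => p * j) := by
    ext m
    simp only [Finset.mem_filter, Finset.mem_Icc, Finset.mem_image]
    constructor
    · rintro ⟨⟨h1, h2⟩, j, rfl⟩
      have hj0 : j ≠ 0 := by rintro rfl; simp at h1
      have hx : p * (n + 1) = p * n + p := by ring
      refine ⟨j, ⟨by omega, ?_⟩, rfl⟩
      by_contra h; push_neg at h
      have : p * (n + 1) ≤ p * j := Nat.mul_le_mul_left p h
      omega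
    · rintro ⟨j, ⟨hj1, hj2⟩, rfl⟩
      have h2 : p * j ≤ p * n := Nat.mul_le_mul_left p hj2
      have h3 : p * 1 ≤ p * j := Nat.mul_le_mul_left p hj1
      exact ⟨⟨by omega, by omega⟩, ⟨j, rfl⟩⟩
  have h2 : ∏ m ∈ (Finset.Icc 1 n).image (fun j => p * j), m
      = p ^ n * Nat.factorial n := by
    rw [Finset.prod_image (by intro a _ b _ h; exact Nat.eq_of_mul_eq_mul_left hp0 h)]
    rw [Finset.prod_mul_distrib, Finset.prod_const, Nat.card_Icc, prodIcc]
    norm_num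
  have h3 : ((Finset.Icc 1 (p*n+i)).filter (fun m => Nat.Coprime p m))
      = ((Finset.Icc 1 (p*n+i)).filter (fun m => ¬ p ∣ m)) := by
    apply Finset.filter_congr
    intro m _
    simp [hp.coprime_iff_not_dvd]
  calc Nat.factorial (p * n + i) = ∏ m ∈ Finset.Icc 1 (p*n+i), m := (prodIcc _).symm
    _ = (∏ m ∈ (Finset.Icc 1 (p*n+i)).filter (fun m => p ∣ m), m)
        * (∏ m ∈ (Finset.Icc 1 (p*n+i)).filter (fun m => ¬ p ∣ m), m) :=
        (Finset.prod_filter_mul_prod_filter_not _ _ _).symm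
    _ = p ^ n * Nat.factorial n * gaussFac p (p * n + i) := by
        rw [h1, h2, gaussFac, h3]
lemma gaussFac_coprime (c n : ℕ) : Nat.Coprime c (gaussFac c n) :=
  Nat.Coprime.prod_right (fun m hm => (Finset.mem_filter.mp hm).2)

lemma gaussFac_pos (c n : ℕ) : 0 < gaussFac c n := by
  apply Finset.prod_pos
  intro m hm
  have := (Finset.mem_filter.mp hm).1
  rw [Finset.mem_Icc] at this
  omega

lemma factB {p : ℕ} (hp : p.Prime) (n i : ℕ) (hi : i < p)
    (hA : Nat.factorial (p * n + i) = p ^ n * Nat.factorial n * gaussFac p (p * n + i)) :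
    padicValNat p (Nat.factorial (p * n + i)) = n + padicValNat p (Nat.factorial n) := by
  haveI : Fact p.Prime := ⟨hp⟩
  rw [hA, padicValNat.mul (Nat.mul_ne_zero (pow_ne_zero n hp.pos.ne') (Nat.factorial_pos n).ne') (gaussFac_pos p _).ne',
    padicValNat.mul (pow_ne_zero n hp.pos.ne') (Nat.factorial_pos n).ne',
    padicValNat.prime_pow,
    padicValNat.eq_zero_of_not_dvd (hp.coprime_iff_not_dvd.mp (gaussFac_coprime p _))]
  omega
lemma lastDigits_eq_ordCompl {p : ℕ} (hp : p.Prime) (k m : ℕ) :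
    lastDigits p k m = (ordCompl[p] m) % p ^ k := by
  rw [lastDigits, Nat.factorization_def m hp]

lemma factC {p : ℕ} (hp : p.Prime) (n i : ℕ)
    (hA : Nat.factorial (p * n + i) = p ^ n * Nat.factorial n * gaussFac p (p * n + i))
    (hcop : Nat.Coprime p (gaussFac p (p * n + i))) :
    ordCompl[p] (Nat.factorial (p * n + i))
      = ordCompl[p] (Nat.factorial n) * gaussFac p (p * n + i) := by
  rw [hA, Nat.ordCompl_mul, Nat.ordCompl_mul]
  have h1 : ordCompl[p] (p ^ n) = 1 := by
    rw [hp.factorization_pow]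
    simp [Nat.div_self (pow_pos hp.pos n)]
  have h2 : ordCompl[p] (gaussFac p (p * n + i)) = gaussFac p (p * n + i) := by
    rw [Nat.factorization_def _ hp,
      padicValNat.eq_zero_of_not_dvd (hp.coprime_iff_not_dvd.mp hcop)]
    simp
  rw [h1, h2, one_mul]
noncomputable def fz (p q : ℕ) (m : ℕ) : ZMod q := if p ∣ m then 1 else (m : ZMod q)

lemma gaussFac_cast {p : ℕ} (hp : p.Prime) (q : ℕ) (N : ℕ) :
    ((gaussFac p N : ℕ) : ZMod q) = ∏ m ∈ Finset.Icc 1 N, fz p q m := by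
  rw [gaussFac, Nat.cast_prod, Finset.prod_filter]
  apply Finset.prod_congr rfl
  intro m _
  by_cases h : p ∣ m
  · simp [fz, h, hp.coprime_iff_not_dvd]
  · simp [fz, h, hp.coprime_iff_not_dvd]

lemma fz_add {p q : ℕ} (hpq : p ∣ q) (m : ℕ) : fz p q (m + q) = fz p q m := by
  have h1 : p ∣ m + q ↔ p ∣ m := by
    constructor
    · intro h; have := Nat.dvd_sub h hpq; simpa using this
    · intro h; exact h.add hpq
  by_cases h : p ∣ m
  · simp [fz, h1, h]
  · simp [fz, h1, h, ZMod.natCast_self]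

lemma Sb_shift {p q : ℕ} (hpq : p ∣ q) (hq : 1 ≤ q) (N : ℕ) :
    ∏ m ∈ Finset.Ioc N (N+q), fz p q m = ∏ m ∈ Finset.Ioc 0 q, fz p q m := by
  induction N with
  | zero => simp
  | succ N ih =>
    have key : ∏ m ∈ Finset.Ioc (N+1) (N+1+q), fz p q m
        = ∏ m ∈ Finset.Ioc N (N+q), fz p q m := by
      have e1 : N+1+q = (N+q)+1 := by ring
      have e2 : (∏ m ∈ Finset.Ioc N (N+1), fz p q m) * ∏ m ∈ Finset.Ioc (N+1) (N+q), fz p q m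
          = ∏ m ∈ Finset.Ioc N (N+q), fz p q m :=
        Finset.prod_Ioc_consecutive _ (by omega) (by omega)
      rw [e1, Finset.prod_Ioc_succ_top (by omega)]
      have e3 : N + q + 1 = (N+1) + q := by ring
      rw [e3, fz_add hpq, ← e2, Nat.Ioc_succ_singleton, Finset.prod_singleton, mul_comm]
    rw [key, ih]

lemma gaussFac_shift {p k : ℕ} (hp : p.Prime) (hk : 1 ≤ k) (N s : ℕ) :
    ((gaussFac p (N + p^k * s) : ℕ) : ZMod (p^k))
      = (gaussFac p N : ZMod (p^k)) * (∏ m ∈ Finset.Ioc 0 (p^k), fz p (p^k) m) ^ s := by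
  set q := p^k with hqdef
  have hpq : p ∣ q := dvd_pow_self p (by omega)
  have hq : 1 ≤ q := Nat.one_le_iff_ne_zero.mpr (pow_ne_zero _ hp.pos.ne')
  induction s with
  | zero => simp
  | succ s ih =>
    have e : N + q*(s+1) = (N + q*s) + q := by ring
    have hIcc : ∀ X : ℕ, Finset.Icc 1 X = Finset.Ioc 0 X := fun X => Finset.Icc_add_one_left_eq_Ioc 0 X
    have hsplit := Finset.prod_Ioc_consecutive (fz p q) (Nat.zero_le (N + q*s)) (Nat.le_add_right (N + q*s) q)
    calc ((gaussFac p (N + q*(s+1)) : ℕ) : ZMod q)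
        = ∏ m ∈ Finset.Ioc 0 ((N + q*s) + q), fz p q m := by
          rw [e, gaussFac_cast hp, hIcc]
      _ = (∏ m ∈ Finset.Ioc 0 (N + q*s), fz p q m) * ∏ m ∈ Finset.Ioc (N+q*s) ((N+q*s)+q), fz p q m := hsplit.symm
      _ = ((gaussFac p (N + q*s) : ℕ) : ZMod q) * ∏ m ∈ Finset.Ioc 0 q, fz p q m := by
          rw [Sb_shift hpq hq, gaussFac_cast hp, hIcc]
      _ = (gaussFac p N : ZMod q) * (∏ m ∈ Finset.Ioc 0 q, fz p q m) ^ (s+1) := by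
          rw [ih, pow_succ]; ring

lemma eps_sq {p k : ℕ} (hp : p.Prime) (hk : 1 ≤ k) :
    (∏ m ∈ Finset.Ioc 0 (p^k), fz p (p^k) m) ^ 2 = 1 := by
  set q := p^k with hqdef
  have hq1 : 1 < q := Nat.one_lt_pow (by omega) hp.one_lt
  haveI : NeZero q := ⟨by omega⟩
  haveI : Fact (1 < p) := ⟨hp.one_lt⟩
  have hpq : p ∣ q := dvd_pow_self p (by omega)
  have hcast : ∏ m ∈ Finset.Ioc 0 q, fz p q m
      = ∏ m ∈ (Finset.Ioc 0 q).filter (fun m => ¬ p ∣ m), (m : ZMod q) := by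
    rw [Finset.prod_filter]
    apply Finset.prod_congr rfl
    intro m _
    by_cases h : p ∣ m <;> simp [fz, h]
  rw [hcast, ← Finset.prod_pow]
  set T := (Finset.Ioc 0 q).filter (fun m => ¬ p ∣ m) with hT
  have hcop : ∀ m ∈ T, Nat.Coprime m q := by
    intro m hm
    obtain ⟨-, h2⟩ := Finset.mem_filter.mp hm
    exact ((hp.coprime_iff_not_dvd.mpr h2).symm).pow_right k
  have hone : ∀ m ∈ T, (m : ZMod q) * (m : ZMod q)⁻¹ = 1 :=
    fun m hm => ZMod.coe_mul_inv_eq_one m (hcop m hm)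
  set g : ℕ → ℕ := fun m => ((m : ZMod q)⁻¹).val with hg
  have hgcast : ∀ m : ℕ, ((g m : ℕ) : ZMod q) = (m : ZMod q)⁻¹ :=
    fun m => ZMod.natCast_zmod_val _
  have hgnd : ∀ m ∈ T, ¬ p ∣ g m := by
    intro m hm hdvd
    have h0 : ((g m : ℕ) : ZMod p) = 0 := (ZMod.natCast_eq_zero_iff _ _).mpr hdvd
    have h1 := congrArg (ZMod.castHom hpq (ZMod p)) (hone m hm)
    rw [← hgcast m, map_mul, map_one, map_natCast, map_natCast, h0, mul_zero] at h1
    exact zero_ne_one h1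
  have hgmem : ∀ m ∈ T, g m ∈ T := by
    intro m hm
    have := hgnd m hm
    refine Finset.mem_filter.mpr ⟨Finset.mem_Ioc.mpr ⟨?_, ?_⟩, this⟩
    · rcases Nat.eq_zero_or_pos (g m) with h | h
      · exact absurd (h ▸ dvd_zero p) this
      · exact h
    · exact le_of_lt (ZMod.val_lt _)
  have hginv : ∀ m ∈ T, g (g m) = m := by
    intro m hm
    obtain ⟨hmem, -⟩ := Finset.mem_filter.mp hm
    obtain ⟨-, hle⟩ := Finset.mem_Ioc.mp hmem
    have hlt : m < q := by
      rcases Nat.lt_or_ge m q with h | h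
      · exact h
      · exfalso
        have : m = q := by omega
        subst this
        exact (Finset.mem_filter.mp hm).2 hpq
    have : (g m : ZMod q)⁻¹ = (m : ZMod q) := by
      rw [hgcast]
      exact ZMod.inv_eq_of_mul_eq_one q _ _ (by rw [mul_comm]; exact hone m hm)
    rw [hg]
    simp only []
    rw [this]
    exact ZMod.val_cast_of_lt hlt
  apply Finset.prod_involution (fun m _ => g m)
  · intro m hm
    rw [hgcast, ← mul_pow, hone m hm, one_pow]
  · intro m hm hne heq
    apply hne
    have : ((g m : ℕ) : ZMod q) = (m : ZMod q) := by rw [heq]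
    rw [hgcast] at this
    calc (m : ZMod q)^2 = (m : ZMod q) * (m : ZMod q) := sq _
      _ = (m : ZMod q) * (m : ZMod q)⁻¹ := by rw [this]
      _ = 1 := hone m hm
  · exact hgmem
  · intro m hm; exact hginv m hm
lemma c_mul_odd {R : Type*} [CommRing R] (c : R) (hc2 : c + c = 0) {m : ℕ}
    (hm : ¬ 2 ∣ m) : c * (m : R) = c := by
  obtain ⟨t, ht⟩ : ∃ t, m = 2*t+1 := ⟨m/2, by omega⟩
  subst ht
  push_cast
  ring_nf
  rw [show c * (t:R) * 2 = (t:R) * (c + c) by ring, hc2]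
  ring

lemma c_mul_prod_odd {R : Type*} [CommRing R] (c : R) (hc2 : c + c = 0)
    (s : Finset ℕ) (hodd : ∀ m ∈ s, ¬ 2 ∣ m) :
    c * ∏ m ∈ s, (m : R) = c := by
  classical
  induction s using Finset.induction_on with
  | empty => simp
  | @insert a s' hx ih =>
    rw [Finset.prod_insert hx, show c * ((a:R) * ∏ m ∈ s', (m:R)) = (c * (a:R)) * ∏ m ∈ s', (m:R) by ring,
      c_mul_odd c hc2 (hodd a (Finset.mem_insert_self a s')), ih (fun m hm => hodd m (Finset.mem_insert_of_mem hm))]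

lemma prod_add_c {R : Type*} [CommRing R] (c : R) (hc2 : c + c = 0) (hcc : c * c = 0)
    (s : Finset ℕ) (hodd : ∀ m ∈ s, ¬ 2 ∣ m) :
    ∏ m ∈ s, ((m : R) + c) = ∏ m ∈ s, (m : R) + ((s.card % 2 : ℕ) : R) * c := by
  classical
  induction s using Finset.induction_on with
  | empty => simp
  | @insert a s' hx ih =>
    have ha : ¬ 2 ∣ a := hodd a (Finset.mem_insert_self a s')
    have hodd' : ∀ m ∈ s', ¬ 2 ∣ m := fun m hm => hodd m (Finset.mem_insert_of_mem hm)
    rw [Finset.prod_insert hx, Finset.prod_insert hx, ih hodd', Finset.card_insert_of_notMem hx]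
    have hP := c_mul_prod_odd c hc2 s' hodd'
    have hac : (a : R) * c = c := by rw [mul_comm]; exact c_mul_odd c hc2 ha
    rcases Nat.even_or_odd s'.card with he | ho
    · have h1 : s'.card % 2 = 0 := Nat.even_iff.mp he
      have h2 : (s'.card + 1) % 2 = 1 := by omega
      rw [h1, h2]
      simp only [Nat.cast_zero, Nat.cast_one, zero_mul, add_zero, one_mul]
      linear_combination hP
    · have h1 : s'.card % 2 = 1 := Nat.odd_iff.mp ho
      have h2 : (s'.card + 1) % 2 = 0 := by omega
      rw [h1, h2]
      simp only [Nat.cast_zero, Nat.cast_one, zero_mul, add_zero, one_mul]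
      linear_combination hac + hP + hcc + hc2

lemma prod_fz_filter (p q X : ℕ) :
    ∏ m ∈ Finset.Ioc 0 X, fz p q m
      = ∏ m ∈ (Finset.Ioc 0 X).filter (fun m => ¬ p ∣ m), (m : ZMod q) := by
  rw [Finset.prod_filter]
  apply Finset.prod_congr rfl
  intro m _
  by_cases h : p ∣ m <;> simp [fz, h]

lemma two_pow_eps : ∀ k : ℕ, 3 ≤ k → gaussFac 2 (2^k) % 2^k = 1 := by
  intro k hk
  induction k, hk using Nat.le_induction with
  | base => decide
  | succ k hk ih =>
    have ih' := ih
    set q : ℕ := 2^k with hq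
    set q' : ℕ := 2^(k+1) with hq'
    have hqq : q' = q + q := by rw [hq, hq', pow_succ]; ring
    have hq1 : 1 < q := Nat.one_lt_pow (by omega) (by norm_num)
    have hq1' : 1 < q' := Nat.one_lt_pow (by omega) (by norm_num)
    set c : ZMod q' := (q : ZMod q') with hc
    have hc2 : c + c = 0 := by
      rw [hc, ← Nat.cast_add, ← hqq, hq']
      exact ZMod.natCast_self _
    have hcc : c * c = 0 := by
      rw [hc, ← Nat.cast_mul]
      rw [ZMod.natCast_eq_zero_iff]
      rw [hq, hq', ← pow_add]
      exact pow_dvd_pow 2 (by omega)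
    have hIcc : ∀ X : ℕ, Finset.Icc 1 X = Finset.Ioc 0 X := fun X => Finset.Icc_add_one_left_eq_Ioc 0 X
    -- split product
    have hsplit : ((gaussFac 2 q' : ℕ) : ZMod q')
        = (∏ m ∈ Finset.Ioc 0 q, fz 2 q' m) * ∏ m ∈ Finset.Ioc q q', fz 2 q' m := by
      rw [gaussFac_cast Nat.prime_two, hIcc, ← Finset.prod_Ioc_consecutive _ (Nat.zero_le q) (by omega)]
    -- second block
    have himg : Finset.Ioc q q' = (Finset.Ioc 0 q).image (· + q) := by
      rw [Finset.image_add_right_Ioc, zero_add, hqq]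
    have hblock2 : ∏ m ∈ Finset.Ioc q q', fz 2 q' m
        = ∏ m ∈ Finset.Ioc 0 q, fz 2 q' (m + q) := by
      rw [himg, Finset.prod_image (by intro a _ b _ h; simp only at h; omega)]
    have hqeven : 2 ∣ q := dvd_pow_self 2 (by omega)
    have hfz : ∀ m, fz 2 q' (m + q) = if 2 ∣ m then 1 else ((m : ZMod q') + c) := by
      intro m
      by_cases h : 2 ∣ m
      · have h2 : 2 ∣ m + q := by omega
        simp [fz, h, h2]
      · have h2 : ¬ 2 ∣ m + q := by omega
        simp only [fz, if_neg h, if_neg h2, hc]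
        push_cast
        ring
    set T : Finset ℕ := (Finset.Ioc 0 q).filter (fun m => ¬ 2 ∣ m) with hT
    have hoddT : ∀ m ∈ T, ¬ 2 ∣ m := fun m hm => (Finset.mem_filter.mp hm).2
    have hblock2' : ∏ m ∈ Finset.Ioc 0 q, fz 2 q' (m + q) = ∏ m ∈ T, ((m : ZMod q') + c) := by
      rw [hT, Finset.prod_filter]
      apply Finset.prod_congr rfl
      intro m _
      rw [hfz]
      by_cases h : 2 ∣ m <;> simp [h]
    have hcard : T.card % 2 = 0 := by
      have h1 : ((Finset.Ioc 0 q).filter (fun m => 2 ∣ m)).card = q / 2 :=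
        Nat.Ioc_filter_dvd_card_eq_div q 2
      have h2 := Finset.card_filter_add_card_filter_not (s := Finset.Ioc 0 q)
        (p := fun m => 2 ∣ m)
      have h3 : (Finset.Ioc 0 q).card = q := by simp
      have h4 : ((Finset.Ioc 0 q).filter (fun m => 2 ∣ m)).card + T.card = q := by
        rw [hT]; simpa using h2
      have h5 : q = 2 * 2^(k-1) := by
        rw [hq, ← pow_succ']
        congr 1
        omega
      have h6 : 2^(k-1) = 2 * 2^(k-2) := by
        rw [← pow_succ']
        congr 1
        omega
      omega
    have hb2 : ∏ m ∈ T, ((m : ZMod q') + c) = ∏ m ∈ T, (m : ZMod q') := by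
      rw [prod_add_c c hc2 hcc T hoddT, hcard]
      simp
    have hTg : ∏ m ∈ T, (m : ZMod q') = ((gaussFac 2 q : ℕ) : ZMod q') := by
      rw [gaussFac_cast Nat.prime_two, hIcc, prod_fz_filter, hT]
    have hsq : ((gaussFac 2 q' : ℕ) : ZMod q') = ((gaussFac 2 q : ℕ) : ZMod q')^2 := by
      rw [hsplit, hblock2, hblock2', hb2, hTg, prod_fz_filter, ← hT, hTg, sq]
    obtain ⟨t, ht⟩ : ∃ t, gaussFac 2 q = q * t + 1 := by
      refine ⟨gaussFac 2 q / q, ?_⟩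
      conv_lhs => rw [← Nat.div_add_mod (gaussFac 2 q) q, ih']
    have hone : ((gaussFac 2 q' : ℕ) : ZMod q') = ((1:ℕ) : ZMod q') := by
      rw [hsq, ht]
      push_cast
      rw [← hc]
      linear_combination ((t:ZMod q') * (t:ZMod q')) * hcc + (t : ZMod q') * hc2
    have := (ZMod.natCast_eq_natCast_iff' _ _ _).mp hone
    rwa [Nat.mod_eq_of_lt hq1'] at this

lemma eps_eq_one_two {k : ℕ} (hk3 : 3 ≤ k) :
    (∏ m ∈ Finset.Ioc 0 (2^k), fz 2 (2^k) m) = 1 := by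
  have h := two_pow_eps k hk3
  have hIcc : Finset.Icc 1 (2^k) = Finset.Ioc 0 (2^k) := Finset.Icc_add_one_left_eq_Ioc 0 _
  rw [← hIcc, ← gaussFac_cast Nat.prime_two]
  calc ((gaussFac 2 (2^k) : ℕ) : ZMod (2^k))
      = ((gaussFac 2 (2^k) % 2^k : ℕ) : ZMod (2^k)) := (ZMod.natCast_mod _ _).symm
    _ = ((1 : ℕ) : ZMod (2^k)) := by rw [h]
    _ = 1 := Nat.cast_one

theorem stmt_11 (p k u v : ℕ) (hp : p.Prime) (hk : 1 ≤ k) (hu : 1 ≤ u)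
    (hv : 0 < v) (hdvd : Nat.lcm (Nat.lcm (p ^ (k - 1)) u) 2 ∣ v)
    (hdvd4 : p = 2 → k = 2 → 4 ∣ v)
    (α : ℕ → ℕ × ℕ × ℕ)
    (hα : ∀ n, α n = (lastDigits p k (Nat.factorial n),
      padicValNat p (Nat.factorial n) % u, n % v)) :
    α 0 = (1, 0, 0) ∧
      ∀ n : ℕ, ∀ i : ℕ, i ≤ p - 1 →
        α (p * n + i) =
          ((α n).1 * gaussFac p (p * (α n).2.2 + i) % p ^ k,
            ((α n).2.1 + (α n).2.2) % u,
            (p * (α n).2.2 + i) % v) := by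
  haveI : Fact p.Prime := ⟨hp⟩
  have hq1 : 1 < p ^ k := Nat.one_lt_pow (by omega) hp.one_lt
  have hpk_dvd : p ^ (k-1) ∣ v :=
    dvd_trans (dvd_trans (Nat.dvd_lcm_left _ u) (Nat.dvd_lcm_left _ 2)) hdvd
  have hu_dvd : u ∣ v :=
    dvd_trans (dvd_trans (Nat.dvd_lcm_right _ u) (Nat.dvd_lcm_left _ 2)) hdvd
  have h2_dvd : 2 ∣ v := dvd_trans (Nat.dvd_lcm_right _ 2) hdvd
  constructor
  · rw [hα 0]
    have h1 : lastDigits p k (Nat.factorial 0) = 1 := by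
      rw [Nat.factorial_zero, lastDigits]
      simp [Nat.mod_eq_of_lt hq1]
    rw [h1, Nat.factorial_zero]
    simp
  · intro n i hi
    have hi' : i < p := by have := hp.two_le; omega
    have hA := factA hp n i hi'
    have hcop := gaussFac_coprime p (p * n + i)
    -- epsilon power
    set q : ℕ := p ^ k with hqdef
    set ε : ZMod q := ∏ m ∈ Finset.Ioc 0 q, fz p q m with hε
    set s : ℕ := v / p ^ (k-1) with hs
    have hv_eq : v = p ^ (k-1) * s := (Nat.div_mul_cancel hpk_dvd).symm.trans (mul_comm _ _)
    have heps : ε ^ s = 1 := by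
      by_cases hcase : p = 2 ∧ 3 ≤ k
      · obtain ⟨hp2, hk3⟩ := hcase
        have : ε = 1 := by
          rw [hε]
          subst hp2
          exact eps_eq_one_two hk3
        rw [this, one_pow]
      · have h2s : 2 ∣ s := by
          by_cases hp2 : p = 2
          · subst hp2
            have hk2 : k = 1 ∨ k = 2 := by
              rcases Nat.lt_or_ge k 3 with h | h
              · omega
              · exact absurd ⟨rfl, h⟩ hcase
            rcases hk2 with rfl | rfl
            · simpa [hs] using h2_dvd
            · have h4 := hdvd4 rfl rfl
              omega
          · have hcop2 : Nat.Coprime (p ^ (k-1)) 2 := by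
              apply Nat.Coprime.pow_left
              rw [Nat.coprime_two_right]
              exact hp.odd_of_ne_two hp2
            have : p ^ (k-1) * 2 ∣ v := Nat.Coprime.mul_dvd_of_dvd_of_dvd hcop2 hpk_dvd h2_dvd
            rw [hv_eq] at this
            have := (mul_dvd_mul_iff_left (a := p ^ (k-1))
              (pow_ne_zero _ hp.pos.ne')).mp this
            exact this
        obtain ⟨t, ht⟩ := h2s
        rw [ht, pow_mul, eps_sq hp hk, one_pow]
    have hN : p * n + i = (p * (n % v) + i) + q * (s * (n / v)) := by
      have h1 : n = n % v + v * (n / v) := (Nat.mod_add_div n v).symm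
      have h2 : q = p * p ^ (k-1) := by
        rw [hqdef, ← pow_succ']
        congr 1
        omega
      calc p * n + i = p * (n % v + v * (n / v)) + i := by rw [← h1]
        _ = p * (n % v) + i + (p * p ^ (k-1)) * (s * (n / v)) := by rw [hv_eq]; ring
        _ = (p * (n % v) + i) + q * (s * (n / v)) := by rw [← h2]
    have hshift : ((gaussFac p (p * n + i) : ℕ) : ZMod q)
        = ((gaussFac p (p * (n % v) + i) : ℕ) : ZMod q) := by
      rw [hN, hqdef, gaussFac_shift hp hk, ← hqdef, ← hε, pow_mul, heps, one_pow, mul_one]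
    rw [hα n, hα (p * n + i)]
    simp only [Prod.mk.injEq]
    refine ⟨?_, ?_, ?_⟩
    · rw [lastDigits_eq_ordCompl hp, lastDigits_eq_ordCompl hp, factC hp n i hA hcop,
        ← ZMod.natCast_eq_natCast_iff', Nat.cast_mul, Nat.cast_mul, ZMod.natCast_mod, hshift]
    · rw [factB hp n i hi' hA]
      have e1 : padicValNat p (Nat.factorial n) % u + n % v
          ≡ padicValNat p (Nat.factorial n) + n [MOD u] :=
        Nat.ModEq.add (Nat.mod_modEq _ u) ((Nat.mod_modEq n v).of_dvd hu_dvd)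
      rw [Nat.add_comm n (padicValNat p (Nat.factorial n))]
      exact e1.symm
    · exact (((Nat.mod_modEq n v).mul_left p).add_right i).symm
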